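/- Let E be a barrelled locally convex Hausdorff topological vector space over ℂ in which every bounded subset is relatively compact in the weak topology σ(E,E′) (i.e. E is reflexive), and let T : E → E be a continuous linear operator. Then T is mean ergodic if and only if T is Cesàro bounded and lim_{n→∞} (1/n)·Tⁿx = 0 for every x ∈ E. -/

import Mathlib

open Filter Topology Bornology Set
open scoped Uniformity Pointwise
set_option linter.unusedSectionVars false

/-- The `n`-th Cesàro mean of `T` applied to `x`: `(1/n) ∑_{m=1}^{n} Tᵐ x`. -/
noncomputable def cesaroMean {E : Type*} [AddCommGroup E] [Module ℂ E] [TopologicalSpace E]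
    (T : E →L[ℂ] E) (n : ℕ) (x : E) : E :=
  (n : ℂ)⁻¹ • ∑ m ∈ Finset.Icc 1 n, (T ^ m) x

section Aux

variable {E : Type*} [AddCommGroup E] [Module ℂ E] [TopologicalSpace E]
  [IsTopologicalAddGroup E] [ContinuousConstSMul ℂ E]

/-- The Cesàro mean as a continuous linear operator. -/
noncomputable def cesaroOp (T : E →L[ℂ] E) (n : ℕ) : E →L[ℂ] E :=
  (n : ℂ)⁻¹ • ∑ m ∈ Finset.Icc 1 n, T ^ m

lemma cesaroOp_apply (T : E →L[ℂ] E) (n : ℕ) (x : E) :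
    cesaroOp T n x = cesaroMean T n x := by
  simp [cesaroOp, cesaroMean, ContinuousLinearMap.sum_apply]

variable (T : E →L[ℂ] E)

lemma sumIcc_succ (n : ℕ) (x : E) :
    ∑ m ∈ Finset.Icc 1 (n + 1), (T ^ m) x
      = (∑ m ∈ Finset.Icc 1 n, (T ^ m) x) + (T ^ (n + 1)) x :=
  Finset.sum_Icc_succ_top (Nat.succ_le_succ (Nat.zero_le n)) _

lemma apply_sumIcc (n : ℕ) (x : E) :
    T (∑ m ∈ Finset.Icc 1 n, (T ^ m) x)
      = ∑ m ∈ Finset.Icc 1 n, (T ^ m) x + (T ^ (n + 1)) x - T x := by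
  induction n with
  | zero => simp
  | succ n ih =>
      rw [sumIcc_succ, map_add, ih, show T ((T ^ (n+1)) x) = (T ^ (n+2)) x by
        rw [pow_succ' T (n+1), ContinuousLinearMap.mul_apply]]
      have h2 : n + 1 + 1 = n + 2 := rfl
      rw [h2]; abel

lemma sumIcc_sub (n : ℕ) (x : E) :
    ∑ m ∈ Finset.Icc 1 n, (T ^ m) (x - T x) = T x - (T ^ (n + 1)) x := by
  induction n with
  | zero => simp
  | succ n ih =>
      rw [sumIcc_succ, ih]
      have : (T ^ (n+1)) (x - T x) = (T ^ (n+1)) x - (T ^ (n+2)) x := by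
        rw [map_sub]; congr 1
      rw [this]
      have h2 : n + 1 + 1 = n + 2 := rfl
      rw [h2]; abel

lemma pow_fixed {y : E} (hy : T y = y) (m : ℕ) : (T ^ m) y = y := by
  induction m with
  | zero => simp
  | succ m ih => rw [pow_succ' T m]; show T ((T ^ m) y) = y; rw [ih, hy]

lemma sumIcc_fixed {y : E} (hy : T y = y) (n : ℕ) :
    ∑ m ∈ Finset.Icc 1 n, (T ^ m) y = n • y := by
  rw [Finset.sum_congr rfl fun m _ => pow_fixed T hy m, Finset.sum_const, Nat.card_Icc]
  simp


lemma cesaroMean_sub (n : ℕ) (x : E) :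
    cesaroMean T (n + 1) (x - T x) = ((n + 1 : ℕ) : ℂ)⁻¹ • (T x - (T ^ (n + 2)) x) := by
  rw [cesaroMean, sumIcc_sub]

lemma apply_cesaroMean (n : ℕ) (x : E) :
    T (cesaroMean T (n + 1) x)
      = cesaroMean T (n + 1) x + ((n + 1 : ℕ) : ℂ)⁻¹ • ((T ^ (n + 2)) x - T x) := by
  rw [cesaroMean, map_smul, apply_sumIcc, smul_sub, smul_add, smul_sub,
    show n + 1 + 1 = n + 2 from rfl]
  abel

lemma cesaroMean_fixed {y : E} (hy : T y = y) (n : ℕ) :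
    cesaroMean T (n + 1) y = y := by
  rw [cesaroMean, sumIcc_fixed T hy, ← Nat.cast_smul_eq_nsmul ℂ,
    inv_smul_smul₀ (by exact_mod_cast Nat.succ_ne_zero n)]

lemma sub_cesaroMean_mem (n : ℕ) (x : E) :
    x - cesaroMean T (n + 1) x ∈ LinearMap.range ((1 - T : E →L[ℂ] E) : E →ₗ[ℂ] E) := by
  have key : ∀ m : ℕ, x - (T ^ m) x ∈ LinearMap.range ((1 - T : E →L[ℂ] E) : E →ₗ[ℂ] E) := by
    intro m
    refine ⟨∑ k ∈ Finset.range m, (T ^ k) x, ?_⟩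
    calc (1 - T : E →L[ℂ] E) (∑ k ∈ Finset.range m, (T ^ k) x)
        = ∑ k ∈ Finset.range m, ((T ^ k) x - (T ^ (k + 1)) x) := by
          rw [ContinuousLinearMap.sub_apply, ContinuousLinearMap.one_apply, map_sum,
            ← Finset.sum_sub_distrib]
          refine Finset.sum_congr rfl fun k _ => ?_
          congr 1
          rw [pow_succ' T k, ContinuousLinearMap.mul_apply]
      _ = x - (T ^ m) x := by
          rw [Finset.sum_range_sub' (fun k => (T ^ k) x) m]
          simp
  have hx : x - cesaroMean T (n + 1) x
      = ((n + 1 : ℕ) : ℂ)⁻¹ • ∑ m ∈ Finset.Icc 1 (n + 1), (x - (T ^ m) x) := by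
    rw [cesaroMean, Finset.sum_sub_distrib, Finset.sum_const, Nat.card_Icc, smul_sub,
      ← Nat.cast_smul_eq_nsmul ℂ (n + 1 + 1 - 1)]
    rw [show n + 1 + 1 - 1 = n + 1 from rfl,
      inv_smul_smul₀ (by exact_mod_cast Nat.succ_ne_zero n)]
  rw [hx]
  exact Submodule.smul_mem _ _ (Submodule.sum_mem _ fun m _ => key m)

lemma cesaroMean_succ_eq (n : ℕ) (x : E) :
    cesaroMean T (n + 1) x = ((n : ℂ) / ((n : ℂ) + 1)) • cesaroMean T n x
      + ((n : ℂ) + 1)⁻¹ • (T ^ (n + 1)) x := by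
  rcases n with _ | m
  · simp [cesaroMean]
  · have h1 : ((m : ℂ) + 1) ≠ 0 := by exact_mod_cast Nat.succ_ne_zero m
    have h2 : ((m : ℂ) + 1 + 1) ≠ 0 := by
      have : ((m + 1 : ℕ) : ℂ) + 1 ≠ 0 := by exact_mod_cast Nat.succ_ne_zero (m + 1)
      push_cast at this ⊢; exact this
    rw [cesaroMean, cesaroMean, sumIcc_succ, smul_add, smul_smul]
    push_cast
    congr 1
    congr 1
    field_simp

end Aux


section Scalar

lemma tendsto_inv_nat_complex : Tendsto (fun n : ℕ => ((n : ℂ))⁻¹) atTop (𝓝 0) := by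
  have h := tendsto_inv_atTop_nhds_zero_nat (𝕜 := ℝ)
  have h2 := (Complex.continuous_ofReal.tendsto (0 : ℝ)).comp h
  refine Tendsto.congr (fun n => ?_) (by simpa using h2)
  simp [Function.comp]

lemma tendsto_inv_nat_add_one_complex :
    Tendsto (fun n : ℕ => ((n : ℂ) + 1)⁻¹) atTop (𝓝 0) := by
  have := tendsto_inv_nat_complex.comp (tendsto_add_atTop_nat 1)
  refine this.congr fun n => ?_
  simp [Function.comp]

lemma tendsto_ratio1 : Tendsto (fun n : ℕ => (n : ℂ) / ((n : ℂ) + 1)) atTop (𝓝 1) := by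
  have h : Tendsto (fun n : ℕ => (1 : ℂ) - ((n : ℂ) + 1)⁻¹) atTop (𝓝 (1 - 0)) :=
    tendsto_const_nhds.sub tendsto_inv_nat_add_one_complex
  rw [sub_zero] at h
  refine h.congr fun n => ?_
  have hne : (n : ℂ) + 1 ≠ 0 := by exact_mod_cast Nat.cast_add_one_ne_zero (R := ℂ) n
  field_simp
  ring

lemma tendsto_ratio2 : Tendsto (fun n : ℕ => ((n : ℂ) + 2) / ((n : ℂ) + 1)) atTop (𝓝 1) := by
  have h : Tendsto (fun n : ℕ => (1 : ℂ) + ((n : ℂ) + 1)⁻¹) atTop (𝓝 (1 + 0)) :=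
    tendsto_const_nhds.add tendsto_inv_nat_add_one_complex
  rw [add_zero] at h
  refine h.congr fun n => ?_
  have hne : (n : ℂ) + 1 ≠ 0 := by exact_mod_cast Nat.cast_add_one_ne_zero (R := ℂ) n
  field_simp
  ring

end Scalar

section Dyn

variable {E : Type*} [AddCommGroup E] [Module ℂ E] [TopologicalSpace E]
  [IsTopologicalAddGroup E] [ContinuousSMul ℂ E] (T : E →L[ℂ] E)

lemma aux_tendsto {u : E}
    (hC : Tendsto (fun n : ℕ => (n : ℂ)⁻¹ • (T ^ n) u) atTop (𝓝 0)) :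
    Tendsto (fun n : ℕ => ((n : ℂ) + 1)⁻¹ • (T ^ (n + 2)) u) atTop (𝓝 (0 : E)) := by
  have h2 : Tendsto (fun n : ℕ => ((n : ℂ) + 2)⁻¹ • (T ^ (n + 2)) u) atTop (𝓝 (0 : E)) := by
    have h := (tendsto_add_atTop_iff_nat 2).mpr hC
    refine h.congr fun n => ?_
    push_cast
    rfl
  have h3 := tendsto_ratio2.smul h2
  rw [smul_zero] at h3
  refine h3.congr fun n => ?_
  rw [smul_smul]
  congr 1
  have hne1 : (n : ℂ) + 1 ≠ 0 := by exact_mod_cast Nat.cast_add_one_ne_zero (R := ℂ) n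
  have hne2 : (n : ℂ) + 2 ≠ 0 := by
    have : ((n + 1 : ℕ) : ℂ) + 1 ≠ 0 := by exact_mod_cast Nat.cast_add_one_ne_zero (R := ℂ) (n + 1)
    push_cast at this
    rw [show (n : ℂ) + 1 + 1 = (n : ℂ) + 2 by ring] at this
    exact this
  field_simp

lemma aux_tendsto_const {v : E} :
    Tendsto (fun n : ℕ => ((n : ℂ) + 1)⁻¹ • v) atTop (𝓝 (0 : E)) := by
  have := tendsto_inv_nat_add_one_complex.smul_const v
  rwa [zero_smul] at this

lemma tendsto_T_cesaro_sub {x : E}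
    (hC : Tendsto (fun n : ℕ => (n : ℂ)⁻¹ • (T ^ n) x) atTop (𝓝 0)) :
    Tendsto (fun n : ℕ => T (cesaroMean T (n + 1) x) - cesaroMean T (n + 1) x)
      atTop (𝓝 (0 : E)) := by
  have h := (aux_tendsto T hC).sub (aux_tendsto_const (v := T x))
  rw [sub_zero] at h
  refine h.congr fun n => ?_
  rw [apply_cesaroMean, add_sub_cancel_left, smul_sub]
  push_cast
  rfl

lemma tendsto_cesaro_range {u : E}
    (hC : Tendsto (fun n : ℕ => (n : ℂ)⁻¹ • (T ^ n) u) atTop (𝓝 0)) :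
    Tendsto (fun n : ℕ => cesaroMean T (n + 1) (u - T u)) atTop (𝓝 (0 : E)) := by
  have h := (aux_tendsto_const (v := T u)).sub (aux_tendsto T hC)
  rw [sub_zero] at h
  refine h.congr fun n => ?_
  rw [cesaroMean_sub, smul_sub]
  push_cast
  rfl

end Dyn

section Unif

variable {E : Type*} [AddCommGroup E] [Module ℂ E] [UniformSpace E]
  [IsUniformAddGroup E] [ContinuousSMul ℂ E]

lemma entourage_mem {W : Set E} (hW : W ∈ 𝓝 (0 : E)) :
    {p : E × E | p.2 - p.1 ∈ W} ∈ 𝓤 E := by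
  rw [uniformity_eq_comap_nhds_zero E]
  exact Filter.preimage_mem_comap hW

lemma isVonNBounded_of_equicontinuous {A : ℕ → E →L[ℂ] E}
    (hEq : Equicontinuous fun n => ⇑(A n)) (x : E) :
    Bornology.IsVonNBounded ℂ (Set.range fun n => A n x) := by
  intro V hV
  have h0 := (hEq 0) _ (entourage_mem hV)
  obtain ⟨W, hW, hWp⟩ := eventually_iff_exists_mem.mp h0
  have habs : Absorbs ℂ W {x} := absorbent_nhds_zero hW x
  filter_upwards [habs] with c hc
  rintro - ⟨n, rfl⟩
  obtain ⟨w, hw, rfl⟩ := hc rfl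
  show A n (c • w) ∈ c • V
  rw [map_smul]
  exact Set.smul_mem_smul_set (by simpa using hWp w hw n)

lemma tendsto_zero_of_closure {A : ℕ → E →L[ℂ] E}
    (hEq : Equicontinuous fun n => ⇑(A n)) {s : Set E}
    (hs : ∀ w ∈ s, Tendsto (fun n => A n w) atTop (𝓝 (0 : E)))
    {z : E} (hz : z ∈ closure s) :
    Tendsto (fun n => A n z) atTop (𝓝 (0 : E)) := by
  rw [Filter.tendsto_def]
  intro V hV
  obtain ⟨W, hW, hWV⟩ := exists_nhds_zero_half hV
  have hWn : (Neg.neg ⁻¹' W : Set E) ∈ 𝓝 (0 : E) :=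
    (continuous_neg.continuousAt (x := (0 : E))).preimage_mem_nhds (by simpa using hW)
  have hW' : W ∩ (Neg.neg ⁻¹' W) ∈ 𝓝 (0 : E) := Filter.inter_mem hW hWn
  obtain ⟨N, hN, hNp⟩ := eventually_iff_exists_mem.mp ((hEq z) _ (entourage_mem hW'))
  obtain ⟨w, hwN, hws⟩ := mem_closure_iff_nhds.mp hz N hN
  have hw0 : ∀ᶠ n in atTop, A n w ∈ W := (hs w hws).eventually_mem hW
  filter_upwards [hw0] with n hn
  have h1 : A n w - A n z ∈ W ∩ (Neg.neg ⁻¹' W) := hNp w hwN n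
  show A n z ∈ V
  have : A n z = A n w + -(A n w - A n z) := by abel
  rw [this]
  exact hWV _ hn _ h1.2

end Unif

lemma mapClusterPt_eq_of_tendsto {α : Type*} [TopologicalSpace α] [T2Space α]
    {u : ℕ → α} {a b : α} (h : MapClusterPt a atTop u) (h' : Tendsto u atTop (𝓝 b)) :
    a = b :=
  t2_iff_nhds.mp inferInstance (Filter.NeBot.mono h (inf_le_inf_left _ h'))

section Sep

variable {E : Type*} [AddCommGroup E] [Module ℂ E] [Module ℝ E] [IsScalarTower ℝ ℂ E]
  [TopologicalSpace E] [IsTopologicalAddGroup E] [ContinuousSMul ℂ E]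
  [LocallyConvexSpace ℝ E] [T2Space E]

lemma eq_zero_of_forall_functional {z : E} (hz : ∀ φ : E →L[ℂ] ℂ, φ z = 0) : z = 0 := by
  by_contra h
  have : ContinuousSMul ℝ E := IsScalarTower.continuousSMul ℂ
  obtain ⟨f, hf⟩ := SeparatingDual.exists_ne_zero (R := ℝ) h
  let g : E →ₗ[ℂ] ℂ := LinearMap.extendTo𝕜' (f : E →ₗ[ℝ] ℝ)
  have hgc : Continuous g := by
    have hcont : Continuous fun x : E =>
        ((f x : ℝ) : ℂ) - (RCLike.I : ℂ) * ((f ((RCLike.I : ℂ) • x) : ℝ) : ℂ) := by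
      fun_prop
    exact hcont.congr fun x => (LinearMap.extendTo𝕜'_apply (𝕜 := ℂ) (f : E →ₗ[ℝ] ℝ) x).symm
  have h0 := hz ⟨g, hgc⟩
  have hre := LinearMap.extendTo𝕜'_apply_re (𝕜 := ℂ) (f : E →ₗ[ℝ] ℝ) z
  rw [show (⟨g, hgc⟩ : E →L[ℂ] ℂ) z = g z from rfl] at h0
  rw [show Module.Dual.extendRCLike (f : E →ₗ[ℝ] ℝ) z = g z from rfl, h0] at hre
  simp at hre
  exact hf hre.symm

end Sep

section Weak

variable {E : Type*} [AddCommGroup E] [Module ℂ E] [TopologicalSpace E]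
  [IsTopologicalAddGroup E] [ContinuousSMul ℂ E]

lemma weak_continuous_functional (φ : E →L[ℂ] ℂ) :
    Continuous fun w : WeakSpace ℂ E => φ ((toWeakSpace ℂ E).symm w) :=
  WeakBilin.eval_continuous (topDualPairing ℂ E).flip φ

end Weak


/-- On a reflexive locally convex Hausdorff space, an operator is mean ergodic if and only if
it is Cesàro bounded and `(1/n) Tⁿ x → 0` for every `x`. -/
theorem stmt2 {E : Type*} [AddCommGroup E] [Module ℂ E] [Module ℝ E] [IsScalarTower ℝ ℂ E]
    [UniformSpace E] [IsUniformAddGroup E] [ContinuousSMul ℂ E]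
    [LocallyConvexSpace ℝ E] [T2Space E]
    -- `E` is barrelled: every pointwise bounded family of continuous linear operators on `E`
    -- is equicontinuous (Banach–Steinhaus property)
    (hbarrelled : ∀ (ι : Type) (f : ι → E →L[ℂ] E),
      (∀ x : E, Bornology.IsVonNBounded ℂ (Set.range fun i => f i x)) →
        Equicontinuous fun i => ⇑(f i))
    -- every bounded subset of `E` is relatively compact in the weak topology `σ(E,E′)`
    (hreflexive : ∀ s : Set E, Bornology.IsVonNBounded ℂ s →
      IsCompact (closure (toWeakSpace ℂ E '' s)))
    (T : E →L[ℂ] E) :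
    -- `T` is mean ergodic
    (∃ P : E →L[ℂ] E, ∀ x : E,
        Tendsto (fun n : ℕ => cesaroMean T (n + 1) x) atTop (𝓝 (P x))) ↔
      -- `T` is Cesàro bounded and `(1/n) Tⁿ x → 0` for every `x`
      (Equicontinuous fun n : ℕ => cesaroMean T (n + 1)) ∧
        ∀ x : E, Tendsto (fun n : ℕ => (n : ℂ)⁻¹ • (T ^ n) x) atTop (𝓝 (0 : E)) := by
  have hAapp : ∀ (n : ℕ) (x : E), cesaroOp T (n + 1) x = cesaroMean T (n + 1) x :=
    fun n x => cesaroOp_apply T (n + 1) x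
  have hfun : (fun n : ℕ => cesaroMean T (n + 1)) = fun n : ℕ => ⇑(cesaroOp T (n + 1)) :=
    funext fun n => funext fun x => (hAapp n x).symm
  constructor
  · rintro ⟨P, hP⟩
    constructor
    · rw [hfun]
      refine hbarrelled ℕ (fun n => cesaroOp T (n + 1)) fun x => ?_
      exact ((hP x).congr fun n => (hAapp n x).symm).isVonNBounded_range (𝕜 := ℂ)
    · intro x
      rw [← tendsto_add_atTop_iff_nat 1]
      have hb : Tendsto (fun n : ℕ => cesaroMean T n x) atTop (𝓝 (P x)) :=
        (tendsto_add_atTop_iff_nat 1).mp (hP x)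
      have h2 := (hP x).sub (tendsto_ratio1.smul hb)
      rw [one_smul, sub_self] at h2
      refine h2.congr fun n => ?_
      rw [cesaroMean_succ_eq T n x, add_sub_cancel_left]
      push_cast
      rfl
  · rintro ⟨hEq, hC⟩
    have hEqA : Equicontinuous fun n : ℕ => ⇑(cesaroOp T (n + 1)) := by rwa [hfun] at hEq
    have hcloF : ∀ z ∈ closure ((LinearMap.range ((1 - T : E →L[ℂ] E) : E →ₗ[ℂ] E) : Submodule ℂ E) : Set E),
        Tendsto (fun n => cesaroOp T (n + 1) z) atTop (𝓝 (0 : E)) := by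
      intro z hz
      refine tendsto_zero_of_closure (A := fun n => cesaroOp T (n + 1)) hEqA ?_ hz
      rintro w ⟨u, rfl⟩
      have he : (1 - T : E →L[ℂ] E) u = u - T u := by
        rw [ContinuousLinearMap.sub_apply, ContinuousLinearMap.one_apply]
      rw [ContinuousLinearMap.coe_coe, he]
      exact (tendsto_cesaro_range T (hC u)).congr fun n => (hAapp n _).symm
    have hconvF : Convex ℝ ((LinearMap.range ((1 - T : E →L[ℂ] E) : E →ₗ[ℂ] E) : Submodule ℂ E) : Set E) := by
      intro u hu v hv a b _ _ _
      show a • u + b • v ∈ (LinearMap.range ((1 - T : E →L[ℂ] E) : E →ₗ[ℂ] E) : Submodule ℂ E)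
      have h1 : a • u = ((a : ℂ)) • u := by
        rw [← Complex.coe_algebraMap]; exact (IsScalarTower.algebraMap_smul ℂ a u).symm
      have h2 : b • v = ((b : ℂ)) • v := by
        rw [← Complex.coe_algebraMap]; exact (IsScalarTower.algebraMap_smul ℂ b v).symm
      rw [h1, h2]
      exact Submodule.add_mem _ (Submodule.smul_mem _ _ hu) (Submodule.smul_mem _ _ hv)
    have key : ∀ x : E, ∃ y : E, T y = y ∧
        Tendsto (fun n => cesaroOp T (n + 1) x) atTop (𝓝 y) := by
      intro x
      have hbd := isVonNBounded_of_equicontinuous (A := fun n => cesaroOp T (n + 1)) hEqA x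
      have hK := hreflexive _ hbd
      have hle : Filter.map (fun n => toWeakSpace ℂ E (cesaroOp T (n + 1) x)) atTop
          ≤ 𝓟 (closure (toWeakSpace ℂ E '' (Set.range fun n => cesaroOp T (n + 1) x))) := by
        rw [Filter.le_principal_iff]
        exact Filter.mem_map.mpr (Filter.Eventually.of_forall fun n =>
          subset_closure (Set.mem_image_of_mem _ (Set.mem_range_self n)))
      obtain ⟨y', _, hy'cl⟩ := hK.exists_clusterPt hle
      have hweak : MapClusterPt y' atTop (fun n => toWeakSpace ℂ E (cesaroOp T (n + 1) x)) :=
        hy'cl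
      have hphi : ∀ φ : E →L[ℂ] ℂ, MapClusterPt (φ ((toWeakSpace ℂ E).symm y')) atTop
          (fun n => φ (cesaroOp T (n + 1) x)) := by
        intro φ
        have h := hweak.continuousAt_comp ((weak_continuous_functional φ).continuousAt)
        have heq : ((fun w : WeakSpace ℂ E => φ ((toWeakSpace ℂ E).symm w)) ∘
            fun n => toWeakSpace ℂ E (cesaroOp T (n + 1) x))
              = fun n => φ (cesaroOp T (n + 1) x) := by
          funext n
          simp [Function.comp]
        rwa [heq] at h
      have hfix : T ((toWeakSpace ℂ E).symm y') = (toWeakSpace ℂ E).symm y' := by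
        rw [← sub_eq_zero]
        apply eq_zero_of_forall_functional
        intro φ
        have hχ := hphi (φ.comp T - φ)
        have h3 : Tendsto (fun n => T (cesaroOp T (n + 1) x) - cesaroOp T (n + 1) x)
            atTop (𝓝 (0 : E)) := by
          refine (tendsto_T_cesaro_sub T (hC x)).congr fun n => ?_
          rw [hAapp n x]
        have h4 : Tendsto (fun n => (φ.comp T - φ) (cesaroOp T (n + 1) x)) atTop (𝓝 0) := by
          have h5 := ((φ.continuous.tendsto (0 : E)).comp h3)
          rw [map_zero] at h5
          refine h5.congr fun n => ?_
          simp [Function.comp, ContinuousLinearMap.sub_apply, map_sub]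
        have h6 := mapClusterPt_eq_of_tendsto hχ h4
        simpa [ContinuousLinearMap.sub_apply, map_sub] using h6
      have hxy : x - (toWeakSpace ℂ E).symm y' ∈
          closure ((LinearMap.range ((1 - T : E →L[ℂ] E) : E →ₗ[ℂ] E) : Submodule ℂ E) : Set E) := by
        have hmem : ∀ n : ℕ, x - cesaroOp T (n + 1) x ∈
            (LinearMap.range ((1 - T : E →L[ℂ] E) : E →ₗ[ℂ] E) : Submodule ℂ E) := fun n => by
          rw [hAapp n x]; exact sub_cesaroMean_mem T n x
        have hcont : Continuous fun w : WeakSpace ℂ E => toWeakSpace ℂ E x - w :=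
          continuous_const.sub continuous_id
        have hcl2 := hweak.continuousAt_comp hcont.continuousAt
        have hsub : ((fun w : WeakSpace ℂ E => toWeakSpace ℂ E x - w) ∘
            fun n => toWeakSpace ℂ E (cesaroOp T (n + 1) x)) ⁻¹'
              (toWeakSpace ℂ E '' ((LinearMap.range ((1 - T : E →L[ℂ] E) : E →ₗ[ℂ] E) : Submodule ℂ E) : Set E))
                ∈ (atTop : Filter ℕ) :=
          Filter.Eventually.of_forall fun n =>
            ⟨x - cesaroOp T (n + 1) x, hmem n, by simp [Function.comp, map_sub]⟩
        have hmemcl : toWeakSpace ℂ E x - y' ∈ closure (toWeakSpace ℂ E ''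
            ((LinearMap.range ((1 - T : E →L[ℂ] E) : E →ₗ[ℂ] E) : Submodule ℂ E) : Set E)) := by
          apply mem_closure_iff_clusterPt.mpr
          exact hcl2.clusterPt.mono (Filter.le_principal_iff.mpr (Filter.mem_map.mpr hsub))
        rw [← hconvF.toWeakSpace_closure ℂ] at hmemcl
        obtain ⟨z, hzcl, hze⟩ := hmemcl
        have hz2 : z = x - (toWeakSpace ℂ E).symm y' := by
          have h7 := congrArg (toWeakSpace ℂ E).symm hze
          rw [LinearEquiv.symm_apply_apply, map_sub, LinearEquiv.symm_apply_apply] at h7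
          exact h7
        rwa [hz2] at hzcl
      refine ⟨(toWeakSpace ℂ E).symm y', hfix, ?_⟩
      have h0 := hcloF _ hxy
      have heq2 : (fun n => cesaroOp T (n + 1) x)
          = fun n => cesaroOp T (n + 1) (x - (toWeakSpace ℂ E).symm y')
            + (toWeakSpace ℂ E).symm y' := by
        funext n
        rw [map_sub, hAapp n ((toWeakSpace ℂ E).symm y'), cesaroMean_fixed T hfix n]
        abel
      rw [heq2]
      simpa using h0.add (tendsto_const_nhds (x := (toWeakSpace ℂ E).symm y'))
    choose p hpfix hp using key
    have padd : ∀ a b : E, p (a + b) = p a + p b := fun a b =>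
      tendsto_nhds_unique (hp (a + b)) (by
        refine ((hp a).add (hp b)).congr fun n => ?_
        rw [map_add])
    have psmul : ∀ (c : ℂ) (a : E), p (c • a) = c • p a := fun c a =>
      tendsto_nhds_unique (hp (c • a)) (by
        refine ((hp a).const_smul c).congr fun n => ?_
        rw [map_smul])
    have pcont : Continuous p :=
      Filter.Tendsto.continuous_of_equicontinuous (tendsto_pi_nhds.mpr fun a => hp a) hEqA
    refine ⟨⟨⟨⟨p, padd⟩, psmul⟩, pcont⟩, fun x => ?_⟩
    exact (hp x).congr fun n => hAapp n x
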